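/- Let P, Q be projections on a Hilbert space H. Then QPQ is a projection if and only if P commutes with Q. -/
import Mathlib


/-- for orthogonal projections `P, Q` on a Hilbert space `H`,
`QPQ` is a projection iff `P` commutes with `Q`. -/
theorem qpq_isProjection_iff_commute {H : Type*} [NormedAddCommGroup H]
    [InnerProductSpace ℂ H] [CompleteSpace H] (P Q : H →L[ℂ] H)
    (hP : IsSelfAdjoint P) (hP2 : IsIdempotentElem P)
    (hQ : IsSelfAdjoint Q) (hQ2 : IsIdempotentElem Q) :
    IsIdempotentElem (Q * P * Q) ↔ Commute P Q := by
  have hPP : P * P = P := hP2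
  have hQQ : Q * Q = Q := hQ2
  constructor
  · intro h
    have hI : Q * P * Q * (Q * P * Q) = Q * P * Q := h
    set S := P * Q - Q * P * Q with hS
    have hstar : star S = Q * P - Q * P * Q := by
      simp [hS, star_sub, star_mul, hP.star_eq, hQ.star_eq, mul_assoc]
    have hSS : star S * S = 0 := by
      rw [hstar, hS]
      have e1 : (Q * P - Q * P * Q) * (P * Q - Q * P * Q)
          = Q * P * P * Q - Q * P * (Q * P * Q) - Q * P * Q * (P * Q)
            + Q * P * Q * (Q * P * Q) := by noncomm_ring
      rw [e1, hI]
      have e2 : Q * P * P * Q = Q * P * Q := by rw [mul_assoc Q P P, hPP]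
      have e3 : Q * P * (Q * P * Q) = Q * P * Q * (P * Q) := by noncomm_ring
      have e4 : Q * P * Q * (P * Q) = Q * P * Q := by
        calc Q * P * Q * (P * Q) = Q * P * (Q * P * Q) := by noncomm_ring
        _ = Q * P * (Q * Q * P * Q) := by rw [hQQ]
        _ = Q * P * Q * (Q * P * Q) := by noncomm_ring
        _ = Q * P * Q := hI
      rw [e2, e3, e4]
      noncomm_ring
    have hS0 : S = 0 := (CStarRing.star_mul_self_eq_zero_iff S).mp hSS
    have hPQ : P * Q = Q * P * Q := by
      have := sub_eq_zero.mp hS0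
      exact this
    have hQP : Q * P = Q * P * Q := by
      have := congrArg star hPQ
      simpa [star_mul, hP.star_eq, hQ.star_eq, mul_assoc] using this
    exact hPQ.trans hQP.symm
  · intro h
    have hPQ : P * Q = Q * P := h
    have : Q * P * Q = P * Q := by rw [← hPQ, mul_assoc, hQQ]
    rw [IsIdempotentElem, this]
    calc P * Q * (P * Q) = P * (Q * P) * Q := by noncomm_ring
    _ = P * (P * Q) * Q := by rw [← hPQ]
    _ = (P * P) * (Q * Q) := by noncomm_ring
    _ = P * Q := by rw [hPP, hQQ]
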